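/- Lipschitz continuity of the policy-to-occupation-measure map: for every transition kernel P there exists a constant L > 0 such that for all stationary policies π₁, π₂ ∈ Π, ‖μ_{π₁} − μ_{π₂}‖₂ ≤ L ‖π₁ − π₂‖₂, where ‖·‖₂ is the Euclidean norm on ℝ^{S×A}. -/

import Mathlib

open scoped BigOperators

variable {S A : Type*}

/-- A stationary policy: nonnegative entries with unit row sums. -/
def IsPolicy [Fintype A] (π : S → A → ℝ) : Prop :=
  (∀ s a, 0 ≤ π s a) ∧ ∀ s, ∑ a, π s a = 1

/-- A transition kernel: nonnegative entries with unit row sums. -/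
def IsKernel [Fintype S] (P : S × A → S → ℝ) : Prop :=
  (∀ p s', 0 ≤ P p s') ∧ ∀ p, ∑ s', P p s' = 1

/-- An initial distribution. -/
def IsInitDist [Fintype S] (ν : S → ℝ) : Prop :=
  (∀ s, 0 ≤ ν s) ∧ ∑ s, ν s = 1

/-- Induced state transition matrix `P_π(s,s') = Σ_a π(s,a) P((s,a),s')`. -/
noncomputable def polMatrix [Fintype A] (P : S × A → S → ℝ) (π : S → A → ℝ) :
    Matrix S S ℝ :=
  Matrix.of fun s s' => ∑ a, π s a * P (s, a) s'

/-- Discounted state distribution `ρ_π(s) = Σ_t γ^t ((P_πᵀ)^t ν)(s)`. -/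
noncomputable def stateDist [Fintype S] [Fintype A] [DecidableEq S]
    (γ : ℝ) (ν : S → ℝ) (P : S × A → S → ℝ) (π : S → A → ℝ) (s : S) : ℝ :=
  ∑' t : ℕ, γ ^ t * (((polMatrix P π).transpose ^ t).mulVec ν s)

/-- Discounted occupation measure `μ_π(s,a) = π(s,a) ρ_π(s)`. -/
noncomputable def occ [Fintype S] [Fintype A] [DecidableEq S]
    (γ : ℝ) (ν : S → ℝ) (P : S × A → S → ℝ) (π : S → A → ℝ) (s : S) (a : A) : ℝ :=
  π s a * stateDist γ ν P π s

noncomputable def fvec [Fintype S] [Fintype A] [DecidableEq S]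
    (ν : S → ℝ) (P : S × A → S → ℝ) (π : S → A → ℝ) (t : ℕ) : S → ℝ :=
  (((polMatrix P π).transpose) ^ t).mulVec ν

lemma fvec_zero [Fintype S] [Fintype A] [DecidableEq S]
    (ν : S → ℝ) (P : S × A → S → ℝ) (π : S → A → ℝ) : fvec ν P π 0 = ν := by
  simp [fvec, Matrix.mulVec_one]

lemma fvec_succ [Fintype S] [Fintype A] [DecidableEq S]
    (ν : S → ℝ) (P : S × A → S → ℝ) (π : S → A → ℝ) (t : ℕ) (s' : S) :
    fvec ν P π (t+1) s' = ∑ s, (∑ a, π s a * P (s, a) s') * fvec ν P π t s := by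
  have : ((polMatrix P π).transpose) ^ (t+1)
      = (polMatrix P π).transpose * ((polMatrix P π).transpose) ^ t := pow_succ' _ _
  simp only [fvec, this, ← Matrix.mulVec_mulVec]
  rfl

lemma fvec_nonneg_sum [Fintype S] [Fintype A] [DecidableEq S]
    (ν : S → ℝ) (hν : IsInitDist ν) (P : S × A → S → ℝ) (hP : IsKernel P)
    (π : S → A → ℝ) (hπ : IsPolicy π) (t : ℕ) :
    (∀ s, 0 ≤ fvec ν P π t s) ∧ ∑ s, fvec ν P π t s = 1 := by
  induction t with
  | zero => simpa [fvec_zero, IsInitDist] using hν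
  | succ t ih =>
    constructor
    · intro s'
      rw [fvec_succ]
      exact Finset.sum_nonneg fun s _ => mul_nonneg
        (Finset.sum_nonneg fun a _ => mul_nonneg (hπ.1 s a) (hP.1 _ _)) (ih.1 s)
    · have : ∀ s, ∑ s', (∑ a, π s a * P (s, a) s') = 1 := by
        intro s
        rw [Finset.sum_comm]
        simp_rw [← Finset.mul_sum, hP.2, mul_one]
        exact hπ.2 s
      calc ∑ s', fvec ν P π (t+1) s'
          = ∑ s', ∑ s, (∑ a, π s a * P (s, a) s') * fvec ν P π t s := by
            simp_rw [fvec_succ]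
        _ = ∑ s, (∑ s', (∑ a, π s a * P (s, a) s')) * fvec ν P π t s := by
            rw [Finset.sum_comm]; simp_rw [Finset.sum_mul]
        _ = ∑ s, fvec ν P π t s := by simp_rw [this, one_mul]
        _ = 1 := ih.2

lemma fvec_le_one [Fintype S] [Fintype A] [DecidableEq S]
    (ν : S → ℝ) (hν : IsInitDist ν) (P : S × A → S → ℝ) (hP : IsKernel P)
    (π : S → A → ℝ) (hπ : IsPolicy π) (t : ℕ) (s : S) : fvec ν P π t s ≤ 1 := by
  have h := fvec_nonneg_sum ν hν P hP π hπ t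
  calc fvec ν P π t s ≤ ∑ s', fvec ν P π t s' :=
        Finset.single_le_sum (fun s' _ => h.1 s') (Finset.mem_univ s)
    _ = 1 := h.2

/-- key difference bound -/
lemma fvec_diff [Fintype S] [Fintype A] [DecidableEq S]
    (ν : S → ℝ) (hν : IsInitDist ν) (P : S × A → S → ℝ) (hP : IsKernel P)
    (π₁ π₂ : S → A → ℝ) (hπ₁ : IsPolicy π₁) (hπ₂ : IsPolicy π₂) (t : ℕ) :
    ∑ s', |fvec ν P π₁ t s' - fvec ν P π₂ t s'| ≤
      t * ∑ s, ∑ a, |π₁ s a - π₂ s a| := by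
  set D := ∑ s, ∑ a, |π₁ s a - π₂ s a| with hD
  have hDnn : 0 ≤ D := Finset.sum_nonneg fun s _ =>
    Finset.sum_nonneg fun a _ => abs_nonneg _
  induction t with
  | zero => simp [fvec_zero]
  | succ t ih =>
    have key : ∀ s', |fvec ν P π₁ (t+1) s' - fvec ν P π₂ (t+1) s'| ≤
        (∑ s, (∑ a, π₁ s a * P (s,a) s') * |fvec ν P π₁ t s - fvec ν P π₂ t s|)
        + ∑ s, ∑ a, |π₁ s a - π₂ s a| * P (s,a) s' := by
      intro s'
      rw [fvec_succ, fvec_succ]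
      have : (∑ s, (∑ a, π₁ s a * P (s, a) s') * fvec ν P π₁ t s)
           - (∑ s, (∑ a, π₂ s a * P (s, a) s') * fvec ν P π₂ t s)
           = (∑ s, (∑ a, π₁ s a * P (s,a) s') * (fvec ν P π₁ t s - fvec ν P π₂ t s))
           + ∑ s, (∑ a, (π₁ s a - π₂ s a) * P (s,a) s') * fvec ν P π₂ t s := by
        rw [← Finset.sum_add_distrib, ← Finset.sum_sub_distrib]
        congr 1; funext s
        simp_rw [sub_mul, Finset.sum_sub_distrib]
        ring
      rw [this]
      refine (abs_add_le _ _).trans (add_le_add ?_ ?_)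
      · refine (Finset.abs_sum_le_sum_abs _ _).trans ?_
        refine Finset.sum_le_sum fun s _ => ?_
        rw [abs_mul, abs_of_nonneg (Finset.sum_nonneg fun a _ =>
          mul_nonneg (hπ₁.1 s a) (hP.1 _ _))]
      · refine (Finset.abs_sum_le_sum_abs _ _).trans ?_
        refine Finset.sum_le_sum fun s _ => ?_
        rw [abs_mul]
        calc |∑ a, (π₁ s a - π₂ s a) * P (s,a) s'| * |fvec ν P π₂ t s|
            ≤ (∑ a, |π₁ s a - π₂ s a| * P (s,a) s') * 1 := by
              refine mul_le_mul ?_ ?_ (abs_nonneg _) ?_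
              · refine (Finset.abs_sum_le_sum_abs _ _).trans ?_
                refine Finset.sum_le_sum fun a _ => ?_
                rw [abs_mul, abs_of_nonneg (hP.1 _ _)]
              · rw [abs_of_nonneg ((fvec_nonneg_sum ν hν P hP π₂ hπ₂ t).1 s)]
                exact fvec_le_one ν hν P hP π₂ hπ₂ t s
              · exact Finset.sum_nonneg fun a _ =>
                  mul_nonneg (abs_nonneg _) (hP.1 _ _)
          _ = ∑ a, |π₁ s a - π₂ s a| * P (s,a) s' := mul_one _
    calc ∑ s', |fvec ν P π₁ (t+1) s' - fvec ν P π₂ (t+1) s'|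
        ≤ ∑ s', ((∑ s, (∑ a, π₁ s a * P (s,a) s') * |fvec ν P π₁ t s - fvec ν P π₂ t s|)
          + ∑ s, ∑ a, |π₁ s a - π₂ s a| * P (s,a) s') :=
          Finset.sum_le_sum fun s' _ => key s'
      _ = (∑ s, (∑ s', ∑ a, π₁ s a * P (s,a) s') * |fvec ν P π₁ t s - fvec ν P π₂ t s|)
          + ∑ s, ∑ a, |π₁ s a - π₂ s a| * (∑ s', P (s,a) s') := by
          rw [Finset.sum_add_distrib]
          congr 1
          · rw [Finset.sum_comm]; simp_rw [Finset.sum_mul]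
          · rw [Finset.sum_comm]
            congr 1; funext s
            rw [Finset.sum_comm]
            simp_rw [Finset.mul_sum]
      _ = (∑ s, |fvec ν P π₁ t s - fvec ν P π₂ t s|) + D := by
          congr 1
          · congr 1; funext s
            have : ∑ s', ∑ a, π₁ s a * P (s,a) s' = 1 := by
              rw [Finset.sum_comm]
              simp_rw [← Finset.mul_sum, hP.2, mul_one]
              exact hπ₁.2 s
            rw [this, one_mul]
          · simp_rw [hP.2, mul_one]; rfl
      _ ≤ t * D + D := by gcongr
      _ = ((t:ℕ) + 1 : ℕ) * D := by push_cast; ring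

/-- Lipschitz continuity of the policy-to-occupation-measure map:
for every transition kernel `P` there exists `L > 0` such that for all stationary
policies `π₁, π₂`, `‖μ_{π₁} − μ_{π₂}‖₂ ≤ L ‖π₁ − π₂‖₂` (Euclidean norms on `ℝ^{S×A}`). -/
theorem stmt6 [Fintype S] [Fintype A] [Nonempty S] [Nonempty A] [DecidableEq S]
    (γ : ℝ) (hγ : γ ∈ Set.Ioo (0 : ℝ) 1)
    (ν : S → ℝ) (hν : IsInitDist ν)
    (P : S × A → S → ℝ) (hP : IsKernel P) :
    ∃ L > 0, ∀ π₁ π₂ : S → A → ℝ, IsPolicy π₁ → IsPolicy π₂ →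
      Real.sqrt (∑ s, ∑ a, (occ γ ν P π₁ s a - occ γ ν P π₂ s a) ^ 2) ≤
        L * Real.sqrt (∑ s, ∑ a, (π₁ s a - π₂ s a) ^ 2) := by
  obtain ⟨hγ0, hγ1⟩ := hγ
  have hγ0' : (0:ℝ) ≤ γ := le_of_lt hγ0
  have hγnorm : ‖γ‖ < 1 := by rwa [Real.norm_eq_abs, abs_of_nonneg hγ0']
  set K : ℝ := ∑' t : ℕ, (t:ℝ)^1 * γ ^ t with hK
  have hKsummable : Summable (fun t : ℕ => (t:ℝ)^1 * γ ^ t) :=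
    summable_pow_mul_geometric_of_norm_lt_one 1 hγnorm
  have hKnn : 0 ≤ K := tsum_nonneg fun t =>
    mul_nonneg (pow_nonneg (Nat.cast_nonneg t) 1) (pow_nonneg hγ0' t)
  set C : ℝ := (1 - γ)⁻¹ + K with hC
  have hCpos : 0 < C := add_pos_of_pos_of_nonneg (inv_pos.mpr (by linarith)) hKnn
  set N : ℝ := (Fintype.card S : ℝ) * (Fintype.card A : ℝ) with hN
  have hN1 : (1:ℝ) ≤ N := by
    have h1 : (1:ℝ) ≤ (Fintype.card S : ℝ) := by
      exact_mod_cast Fintype.card_pos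
    have h2 : (1:ℝ) ≤ (Fintype.card A : ℝ) := by
      exact_mod_cast Fintype.card_pos
    nlinarith
  have hNpos : 0 < N := lt_of_lt_of_le one_pos hN1
  refine ⟨N * C, mul_pos hNpos hCpos, ?_⟩
  intro π₁ π₂ hπ₁ hπ₂
  -- basic objects
  set D : ℝ := ∑ s, ∑ a, |π₁ s a - π₂ s a| with hD
  have hDnn : 0 ≤ D := Finset.sum_nonneg fun s _ =>
    Finset.sum_nonneg fun a _ => abs_nonneg _
  have hstate : ∀ (π : S → A → ℝ) (s : S),
      stateDist γ ν P π s = ∑' t : ℕ, γ ^ t * fvec ν P π t s := fun π s => rfl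
  have hsummable : ∀ (π : S → A → ℝ), IsPolicy π → ∀ s : S,
      Summable (fun t : ℕ => γ ^ t * fvec ν P π t s) := by
    intro π hπ s
    refine Summable.of_norm_bounded
      (summable_geometric_of_lt_one hγ0' hγ1) ?_
    intro t
    rw [Real.norm_eq_abs, abs_mul, abs_of_nonneg (pow_nonneg hγ0' t),
      abs_of_nonneg ((fvec_nonneg_sum ν hν P hP π hπ t).1 s)]
    nlinarith [fvec_le_one ν hν P hP π hπ t s, pow_nonneg hγ0' t]
  -- state distribution bounds
  have hρnn : ∀ (π : S → A → ℝ), IsPolicy π → ∀ s, 0 ≤ stateDist γ ν P π s := by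
    intro π hπ s
    rw [hstate]
    exact tsum_nonneg fun t =>
      mul_nonneg (pow_nonneg hγ0' t) ((fvec_nonneg_sum ν hν P hP π hπ t).1 s)
  have hρle : ∀ (π : S → A → ℝ), IsPolicy π → ∀ s,
      stateDist γ ν P π s ≤ (1 - γ)⁻¹ := by
    intro π hπ s
    rw [hstate]
    calc ∑' t : ℕ, γ ^ t * fvec ν P π t s ≤ ∑' t : ℕ, γ ^ t := by
          refine Summable.tsum_le_tsum ?_ (hsummable π hπ s)
            (summable_geometric_of_lt_one hγ0' hγ1)
          intro t
          nlinarith [fvec_le_one ν hν P hP π hπ t s, pow_nonneg hγ0' t,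
            (fvec_nonneg_sum ν hν P hP π hπ t).1 s]
      _ = (1 - γ)⁻¹ := tsum_geometric_of_lt_one hγ0' hγ1
  -- difference of state distributions
  have hΔρ : ∀ s, |stateDist γ ν P π₁ s - stateDist γ ν P π₂ s| ≤ K * D := by
    intro s
    have hsub : stateDist γ ν P π₁ s - stateDist γ ν P π₂ s
        = ∑' t : ℕ, (γ ^ t * fvec ν P π₁ t s - γ ^ t * fvec ν P π₂ t s) := by
      rw [hstate, hstate]
      exact (Summable.tsum_sub (hsummable π₁ hπ₁ s) (hsummable π₂ hπ₂ s)).symm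
    have hbound : ∀ t : ℕ, ‖γ ^ t * fvec ν P π₁ t s - γ ^ t * fvec ν P π₂ t s‖
        ≤ ((t:ℝ)^1 * γ ^ t) * D := by
      intro t
      rw [Real.norm_eq_abs, ← mul_sub, abs_mul, abs_of_nonneg (pow_nonneg hγ0' t)]
      have h1 : |fvec ν P π₁ t s - fvec ν P π₂ t s| ≤ (t:ℝ) * D := by
        calc |fvec ν P π₁ t s - fvec ν P π₂ t s|
            ≤ ∑ s', |fvec ν P π₁ t s' - fvec ν P π₂ t s'| :=
              Finset.single_le_sum (f := fun s' => |fvec ν P π₁ t s' - fvec ν P π₂ t s'|)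
                (fun s' _ => abs_nonneg _) (Finset.mem_univ s)
          _ ≤ (t:ℝ) * D := fvec_diff ν hν P hP π₁ π₂ hπ₁ hπ₂ t
      calc γ ^ t * |fvec ν P π₁ t s - fvec ν P π₂ t s|
          ≤ γ ^ t * ((t:ℝ) * D) := by
            exact mul_le_mul_of_nonneg_left h1 (pow_nonneg hγ0' t)
        _ = ((t:ℝ)^1 * γ ^ t) * D := by ring
    have hsumnorm : Summable (fun t : ℕ =>
        ‖γ ^ t * fvec ν P π₁ t s - γ ^ t * fvec ν P π₂ t s‖) := by
      refine Summable.of_nonneg_of_le (fun t => norm_nonneg _) hbound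
        (hKsummable.mul_right D)
    calc |stateDist γ ν P π₁ s - stateDist γ ν P π₂ s|
        = ‖∑' t : ℕ, (γ ^ t * fvec ν P π₁ t s - γ ^ t * fvec ν P π₂ t s)‖ := by
          rw [hsub, Real.norm_eq_abs]
      _ ≤ ∑' t : ℕ, ‖γ ^ t * fvec ν P π₁ t s - γ ^ t * fvec ν P π₂ t s‖ :=
          norm_tsum_le_tsum_norm hsumnorm
      _ ≤ ∑' t : ℕ, ((t:ℝ)^1 * γ ^ t) * D :=
          Summable.tsum_le_tsum hbound hsumnorm (hKsummable.mul_right D)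
      _ = K * D := by rw [tsum_mul_right]
  -- pointwise bound on occupation measure difference
  have hΔμ : ∀ s a, |occ γ ν P π₁ s a - occ γ ν P π₂ s a| ≤ C * D := by
    intro s a
    have hsplit : occ γ ν P π₁ s a - occ γ ν P π₂ s a
        = (π₁ s a - π₂ s a) * stateDist γ ν P π₁ s
          + π₂ s a * (stateDist γ ν P π₁ s - stateDist γ ν P π₂ s) := by
      simp only [occ]; ring
    have hπD : |π₁ s a - π₂ s a| ≤ D := by
      calc |π₁ s a - π₂ s a| ≤ ∑ a', |π₁ s a' - π₂ s a'| :=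
            Finset.single_le_sum (f := fun a' => |π₁ s a' - π₂ s a'|)
              (fun a' _ => abs_nonneg _) (Finset.mem_univ a)
        _ ≤ D := Finset.single_le_sum
            (f := fun s => ∑ a', |π₁ s a' - π₂ s a'|)
            (fun s' _ => Finset.sum_nonneg fun a' _ => abs_nonneg _)
            (Finset.mem_univ s)
    have hπ₂le1 : π₂ s a ≤ 1 := by
      calc π₂ s a ≤ ∑ a', π₂ s a' :=
            Finset.single_le_sum (fun a' _ => hπ₂.1 s a') (Finset.mem_univ a)
        _ = 1 := hπ₂.2 s
    calc |occ γ ν P π₁ s a - occ γ ν P π₂ s a|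
        ≤ |π₁ s a - π₂ s a| * stateDist γ ν P π₁ s
          + π₂ s a * |stateDist γ ν P π₁ s - stateDist γ ν P π₂ s| := by
          rw [hsplit]
          refine (abs_add_le _ _).trans (add_le_add ?_ ?_)
          · rw [abs_mul, abs_of_nonneg (hρnn π₁ hπ₁ s)]
          · rw [abs_mul, abs_of_nonneg (hπ₂.1 s a)]
      _ ≤ |π₁ s a - π₂ s a| * (1 - γ)⁻¹ + 1 * (K * D) := by
          refine add_le_add ?_ ?_
          · exact mul_le_mul_of_nonneg_left (hρle π₁ hπ₁ s) (abs_nonneg _)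
          · exact mul_le_mul hπ₂le1 (hΔρ s) (abs_nonneg _) zero_le_one
      _ ≤ D * (1 - γ)⁻¹ + 1 * (K * D) := by
          exact add_le_add (mul_le_mul_of_nonneg_right hπD
            (le_of_lt (inv_pos.mpr (by linarith)))) le_rfl
      _ = C * D := by rw [hC]; ring
  -- Cauchy-Schwarz: D ≤ √N * R
  set R : ℝ := Real.sqrt (∑ s, ∑ a, (π₁ s a - π₂ s a) ^ 2) with hR
  have hRnn : 0 ≤ R := Real.sqrt_nonneg _
  have hDR : D ≤ Real.sqrt N * R := by
    have hcs := Finset.sum_mul_sq_le_sq_mul_sq Finset.univ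
      (fun _ : S × A => (1:ℝ)) (fun p : S × A => |π₁ p.1 p.2 - π₂ p.1 p.2|)
    simp only [one_mul, one_pow, sq_abs] at hcs
    have hD2 : D ^ 2 ≤ N * ∑ s, ∑ a, (π₁ s a - π₂ s a) ^ 2 := by
      have e1 : (∑ p : S × A, |π₁ p.1 p.2 - π₂ p.1 p.2|) = D := by
        rw [hD, Fintype.sum_prod_type]
      have e2 : (∑ p : S × A, (π₁ p.1 p.2 - π₂ p.1 p.2) ^ 2)
          = ∑ s, ∑ a, (π₁ s a - π₂ s a) ^ 2 := by
        rw [Fintype.sum_prod_type]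
      have e3 : (∑ _p : S × A, (1:ℝ)) = N := by
        rw [Finset.sum_const, Finset.card_univ, Fintype.card_prod, hN]
        ring
      rw [e1, e2, e3] at hcs
      exact hcs
    calc D = Real.sqrt (D ^ 2) := by rw [Real.sqrt_sq hDnn]
      _ ≤ Real.sqrt (N * ∑ s, ∑ a, (π₁ s a - π₂ s a) ^ 2) := Real.sqrt_le_sqrt hD2
      _ = Real.sqrt N * R := by
          rw [Real.sqrt_mul (le_of_lt hNpos), hR]
  -- final chain
  have hLHS : Real.sqrt (∑ s, ∑ a, (occ γ ν P π₁ s a - occ γ ν P π₂ s a) ^ 2)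
      ≤ Real.sqrt N * (C * D) := by
    have hsum : ∑ s, ∑ a, (occ γ ν P π₁ s a - occ γ ν P π₂ s a) ^ 2
        ≤ N * (C * D) ^ 2 := by
      calc ∑ s, ∑ a, (occ γ ν P π₁ s a - occ γ ν P π₂ s a) ^ 2
          ≤ ∑ s : S, ∑ a : A, (C * D) ^ 2 := by
            refine Finset.sum_le_sum fun s _ => Finset.sum_le_sum fun a _ => ?_
            rw [← sq_abs]
            exact pow_le_pow_left₀ (abs_nonneg _) (hΔμ s a) 2
        _ = N * (C * D) ^ 2 := by
            simp [Finset.sum_const, hN]; ring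
    calc Real.sqrt (∑ s, ∑ a, (occ γ ν P π₁ s a - occ γ ν P π₂ s a) ^ 2)
        ≤ Real.sqrt (N * (C * D) ^ 2) := Real.sqrt_le_sqrt hsum
      _ = Real.sqrt N * (C * D) := by
          rw [Real.sqrt_mul (le_of_lt hNpos),
            Real.sqrt_sq (mul_nonneg (le_of_lt hCpos) hDnn)]
  calc Real.sqrt (∑ s, ∑ a, (occ γ ν P π₁ s a - occ γ ν P π₂ s a) ^ 2)
      ≤ Real.sqrt N * (C * D) := hLHS
    _ ≤ Real.sqrt N * (C * (Real.sqrt N * R)) := by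
        refine mul_le_mul_of_nonneg_left
          (mul_le_mul_of_nonneg_left hDR (le_of_lt hCpos)) (Real.sqrt_nonneg _)
    _ = (Real.sqrt N * Real.sqrt N) * C * R := by ring
    _ = N * C * R := by rw [Real.mul_self_sqrt (le_of_lt hNpos)]
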